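/- Let ρ be a density matrix on ℂ^d, let V be a d×d unitary matrix, and let {P_n}_{n∈F} be a finite family of positive semidefinite d×d matrices satisfying ∑_n P_n² = 1. Set σ = V ρ V†, p_n = tr(P_n σ P_n), and for p_n > 0 set σ⁽ⁿ⁾ = P_n σ P_n / p_n. Then H(p) + ∑_{n : p_n > 0} p_n S(σ⁽ⁿ⁾) − S(ρ) ≥ 0. (This is the positivity of the average entropy production Σ^ctrl of a control operation consisting of a unitary interaction followed by a measurement.) -/

import Mathlib

open Matrix
open scoped BigOperators Classical ComplexOrder

/-- Von Neumann entropy of a matrix: `-∑ λᵢ log λᵢ` over its eigenvalues if it is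
Hermitian, and `0` otherwise (junk value). -/
noncomputable def vnEntropy {n : Type*} [Fintype n] [DecidableEq n]
    (A : Matrix n n ℂ) : ℝ :=
  if hA : A.IsHermitian then ∑ i, Real.negMulLog (hA.eigenvalues i) else 0

/-- Shannon entropy of a (probability) vector. -/
noncomputable def shannonEntropy {F : Type*} [Fintype F] (p : F → ℝ) : ℝ :=
  ∑ n, Real.negMulLog (p n)

/-- Jensen's inequality for `negMulLog` with subnormalized weights. -/
lemma aux_jensen_negMulLog {ι : Type*} [Fintype ι] (c s : ι → ℝ)
    (hc : ∀ i, 0 ≤ c i) (hs : ∀ i, 0 ≤ s i) (hsum : ∑ i, c i ≤ 1) :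
    ∑ i, c i * Real.negMulLog (s i) ≤ Real.negMulLog (∑ i, c i * s i) := by
  have h := Real.concaveOn_negMulLog.map_add_sum_le (t := Finset.univ) (w := c) (p := s)
      (v := 1 - ∑ i, c i) (q := 0)
      (fun i _ => hc i) (by ring) (fun i _ => Set.mem_Ici.2 (hs i)) (by linarith)
      (Set.mem_Ici.2 le_rfl)
  simpa using h

/-- Diagonal entries of a positive semidefinite matrix are nonnegative (in `ℂ`). -/
lemma aux_diag_nonneg {m : Type*} [Fintype m] [DecidableEq m] {A : Matrix m m ℂ}
    (hA : A.PosSemidef) (j : m) : 0 ≤ A j j := by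
  exact hA.diag_nonneg

/-- The trace of a Hermitian matrix is the sum of its eigenvalues. -/
lemma aux_trace_eq_sum_eigenvalues {m : Type*} [Fintype m] [DecidableEq m]
    {A : Matrix m m ℂ} (hA : A.IsHermitian) :
    A.trace = ∑ i, (hA.eigenvalues i : ℂ) := by
  conv_lhs => rw [hA.spectral_theorem, Unitary.conjStarAlgAut_apply]
  rw [Matrix.trace_mul_cycle,
    show (star (hA.eigenvectorUnitary : Matrix m m ℂ)) * (hA.eigenvectorUnitary : Matrix m m ℂ)
      = 1 from (Matrix.mem_unitaryGroup_iff').mp hA.eigenvectorUnitary.2,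
    one_mul, trace_diagonal]
  simp [RCLike.ofReal]

/-- A positive semidefinite matrix with zero trace is zero. -/
lemma aux_psd_trace_zero {m : Type*} [Fintype m] [DecidableEq m]
    {A : Matrix m m ℂ} (hA : A.PosSemidef) (h : A.trace = 0) : A = 0 := by
  have h1 : ((∑ i, hA.1.eigenvalues i : ℝ) : ℂ) = 0 := by
    rw [Complex.ofReal_sum, ← aux_trace_eq_sum_eigenvalues hA.1, h]
  have h2 : ∑ i, hA.1.eigenvalues i = 0 := by exact_mod_cast h1
  have h3 : ∀ i ∈ Finset.univ, hA.1.eigenvalues i = 0 :=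
    (Finset.sum_eq_zero_iff_of_nonneg (fun i _ => hA.eigenvalues_nonneg i)).mp h2
  have h4 : diagonal (RCLike.ofReal ∘ hA.1.eigenvalues) = (0 : Matrix m m ℂ) := by
    ext i j
    by_cases hij : i = j <;>
      simp [diagonal_apply, hij, h3 j (Finset.mem_univ j), h3 i (Finset.mem_univ i)]
  have := hA.1.spectral_theorem
  rw [h4] at this
  simpa using this

/-- The key inequality: entropy does not decrease under pinching by the measurement
operators `P n`. -/
lemma key_ineq {d : ℕ} {F : Type*} [Fintype F]
    (U : Matrix (Fin d) (Fin d) ℂ) (hU : Uᴴ * U = 1) (hU' : U * Uᴴ = 1)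
    (s : Fin d → ℝ) (hs : ∀ k, 0 ≤ s k)
    (P : F → Matrix (Fin d) (Fin d) ℂ) (hP : ∀ n, (P n).PosSemidef)
    (hPsum : ∑ n, (P n) ^ 2 = 1)
    (W : F → Matrix (Fin d) (Fin d) ℂ)
    (hW : ∀ n, (W n)ᴴ * W n = 1) (hW' : ∀ n, W n * (W n)ᴴ = 1)
    (g : F → Fin d → ℝ)
    (hg : ∀ n j, ((W n)ᴴ * (P n * (U * diagonal (fun k => (s k : ℂ)) * Uᴴ) * P n) * W n) j j
        = (g n j : ℂ)) :
    ∑ k, Real.negMulLog (s k) ≤ ∑ n, ∑ j, Real.negMulLog (g n j) := by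
  set Q : F → Matrix (Fin d) (Fin d) ℂ := fun n => (W n)ᴴ * P n * U with hQ
  set c : F → Fin d → Fin d → ℝ := fun n j k => Complex.normSq (Q n j k) with hc
  have hPh : ∀ n, (P n)ᴴ = P n := fun n => (hP n).1
  have hQH : ∀ n, (Q n)ᴴ = Uᴴ * P n * (W n) := by
    intro n
    simp [hQ, conjTranspose_mul, hPh n, Matrix.mul_assoc]
  -- (a) g n j = ∑ k, c n j k * s k
  have ha : ∀ n j, g n j = ∑ k, c n j k * s k := by
    intro n j
    have hmat : (W n)ᴴ * (P n * (U * diagonal (fun k => (s k : ℂ)) * Uᴴ) * P n) * W n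
        = Q n * diagonal (fun k => (s k : ℂ)) * (Q n)ᴴ := by
      rw [hQH n, hQ]
      simp [Matrix.mul_assoc]
    have := hg n j
    rw [hmat] at this
    have hentry : (Q n * diagonal (fun k => (s k : ℂ)) * (Q n)ᴴ) j j
        = ((∑ k, c n j k * s k : ℝ) : ℂ) := by
      simp only [Matrix.mul_apply, Matrix.conjTranspose_apply, Matrix.diagonal_apply,
        mul_ite, mul_zero, Finset.sum_ite_eq', Finset.mem_univ, if_true,
        Complex.ofReal_sum, Complex.ofReal_mul, Complex.star_def]
      refine Finset.sum_congr rfl fun k _ => ?_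
      rw [hc, ← Complex.mul_conj]
      ring
    rw [hentry] at this
    exact_mod_cast this.symm
  -- (b) row sums ≤ 1
  have hb : ∀ n j, ∑ k, c n j k ≤ 1 := by
    intro n j
    have h1 : Q n * (Q n)ᴴ = (W n)ᴴ * (P n ^ 2) * W n := by
      rw [hQH n, hQ, pow_two]
      calc (W n)ᴴ * P n * U * (Uᴴ * P n * W n)
          = (W n)ᴴ * P n * (U * Uᴴ) * (P n * W n) := by noncomm_ring
        _ = (W n)ᴴ * (P n * P n) * W n := by rw [hU']; noncomm_ring
    have h2 : (Q n * (Q n)ᴴ) j j = ((∑ k, c n j k : ℝ) : ℂ) := by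
      simp only [Matrix.mul_apply, Matrix.conjTranspose_apply, Complex.ofReal_sum,
        Complex.star_def]
      refine Finset.sum_congr rfl fun k _ => ?_
      rw [hc, Complex.mul_conj]
    -- 1 - P n ^ 2 is PSD
    have hps : (1 - P n ^ 2).PosSemidef := by
      have : (1 : Matrix (Fin d) (Fin d) ℂ) - P n ^ 2 = ∑ m ∈ Finset.univ.erase n, P m ^ 2 := by
        rw [← hPsum, ← Finset.add_sum_erase _ _ (Finset.mem_univ n)]
        abel
      rw [this]
      refine Finset.sum_induction _ _ (fun a b hab hbb => hab.add hbb) ?_ ?_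
      · exact ⟨isHermitian_zero, by simp⟩
      · exact fun m _ => (hP m).pow 2
    have hps2 : ((W n)ᴴ * (1 - P n ^ 2) * W n).PosSemidef :=
      hps.conjTranspose_mul_mul_same (W n)
    have h3 := aux_diag_nonneg hps2 j
    have h4 : (W n)ᴴ * (1 - P n ^ 2) * W n = 1 - (W n)ᴴ * (P n ^ 2) * W n := by
      rw [Matrix.mul_sub, Matrix.sub_mul, Matrix.mul_one, hW n]
    rw [h4, ← h1] at h3
    have h5 : (0 : ℂ) ≤ ((1 - ∑ k, c n j k : ℝ) : ℂ) := by
      have : ((1 : Matrix (Fin d) (Fin d) ℂ) - Q n * (Q n)ᴴ) j j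
          = ((1 - ∑ k, c n j k : ℝ) : ℂ) := by
        simp [Matrix.sub_apply, h2, Matrix.one_apply_eq]
      rwa [this] at h3
    have := Complex.zero_le_real.mp h5
    linarith
  -- (c) column sums = 1
  have hcol : ∀ k, ∑ n, ∑ j, c n j k = 1 := by
    intro k
    have h1 : ∑ n, (Q n)ᴴ * Q n = 1 := by
      have : ∀ n, (Q n)ᴴ * Q n = Uᴴ * (P n ^ 2) * U := by
        intro n
        rw [hQH n, hQ, pow_two]
        calc Uᴴ * P n * W n * ((W n)ᴴ * P n * U)
            = Uᴴ * P n * (W n * (W n)ᴴ) * (P n * U) := by noncomm_ring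
          _ = Uᴴ * (P n * P n) * U := by rw [hW' n]; noncomm_ring
      rw [Finset.sum_congr rfl (fun n _ => this n)]
      calc ∑ n, Uᴴ * (P n ^ 2) * U = Uᴴ * (∑ n, P n ^ 2) * U := by
            rw [Finset.mul_sum, Finset.sum_mul]
        _ = 1 := by rw [hPsum, Matrix.mul_one, hU]
    have h2 : ∀ n, ((Q n)ᴴ * Q n) k k = ((∑ j, c n j k : ℝ) : ℂ) := by
      intro n
      simp only [Matrix.mul_apply, Matrix.conjTranspose_apply, Complex.ofReal_sum,
        Complex.star_def]
      refine Finset.sum_congr rfl fun j _ => ?_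
      rw [hc, ← Complex.normSq_eq_conj_mul_self]
    have h3 : ((∑ n, ∑ j, c n j k : ℝ) : ℂ) = 1 := by
      rw [Complex.ofReal_sum]
      calc ∑ n, ((∑ j, c n j k : ℝ) : ℂ)
          = ∑ n, ((Q n)ᴴ * Q n) k k := Finset.sum_congr rfl fun n _ => (h2 n).symm
        _ = (∑ n, (Q n)ᴴ * Q n) k k := by simp [Matrix.sum_apply]
        _ = 1 := by rw [h1, Matrix.one_apply_eq]
    exact_mod_cast h3
  -- put together
  calc ∑ k, Real.negMulLog (s k)
      = ∑ k, (∑ n, ∑ j, c n j k) * Real.negMulLog (s k) := by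
        refine Finset.sum_congr rfl fun k _ => ?_; rw [hcol k, one_mul]
    _ = ∑ k, ∑ n, ∑ j, c n j k * Real.negMulLog (s k) := by
        refine Finset.sum_congr rfl fun k _ => ?_
        rw [Finset.sum_mul]
        exact Finset.sum_congr rfl fun n _ => Finset.sum_mul _ _ _
    _ = ∑ n, ∑ j, ∑ k, c n j k * Real.negMulLog (s k) := by
        rw [Finset.sum_comm]
        exact Finset.sum_congr rfl fun n _ => Finset.sum_comm
    _ ≤ ∑ n, ∑ j, Real.negMulLog (∑ k, c n j k * s k) := by
        refine Finset.sum_le_sum fun n _ => Finset.sum_le_sum fun j _ => ?_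
        exact aux_jensen_negMulLog _ _ (fun k => Complex.normSq_nonneg _) hs (hb n j)
    _ = ∑ n, ∑ j, Real.negMulLog (g n j) := by
        refine Finset.sum_congr rfl fun n _ => Finset.sum_congr rfl fun j _ => ?_
        rw [ha n j]

/-- Positivity of the average entropy production `Σ^ctrl` of a control operation
consisting of a unitary interaction `V` followed by a measurement `{P n}`. -/
theorem avg_entropy_production_ctrl_nonneg
    {d : ℕ} {F : Type*} [Fintype F]
    (ρ : Matrix (Fin d) (Fin d) ℂ) (hρ : ρ.PosSemidef) (hρtr : ρ.trace = 1)
    (V : Matrix (Fin d) (Fin d) ℂ) (hV : Vᴴ * V = 1) (hV' : V * Vᴴ = 1)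
    (P : F → Matrix (Fin d) (Fin d) ℂ) (hP : ∀ n, (P n).PosSemidef)
    (hPsum : ∑ n, (P n) ^ 2 = 1)
    (σ : Matrix (Fin d) (Fin d) ℂ) (hσ : σ = V * ρ * Vᴴ)
    (p : F → ℝ) (hp : ∀ n, (p n : ℂ) = (P n * σ * P n).trace) :
    0 ≤ shannonEntropy p +
        (∑ n ∈ Finset.univ.filter (fun n => 0 < p n),
          p n * vnEntropy ((p n)⁻¹ • (P n * σ * P n))) - vnEntropy ρ := by
  have hσps : σ.PosSemidef := by rw [hσ]; exact hρ.mul_mul_conjTranspose_same V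
  have hMps : ∀ n, (P n * σ * P n).PosSemidef := by
    intro n
    have := hσps.mul_mul_conjTranspose_same (P n)
    rwa [show (P n)ᴴ = P n from (hP n).1] at this
  have hpnn : ∀ n, 0 ≤ p n := by
    intro n
    have h0 : (0 : ℂ) ≤ (p n : ℂ) := by
      rw [hp n, Matrix.trace]
      exact Finset.sum_nonneg fun j _ => aux_diag_nonneg (hMps n) j
    exact Complex.zero_le_real.mp h0
  -- spectral data of ρ
  set s : Fin d → ℝ := hρ.1.eigenvalues with hsdef
  have hs : ∀ k, 0 ≤ s k := hρ.eigenvalues_nonneg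
  set E : Matrix (Fin d) (Fin d) ℂ := (hρ.1.eigenvectorUnitary : Matrix (Fin d) (Fin d) ℂ)
    with hEdef
  have hE1 : Eᴴ * E = 1 := (Matrix.mem_unitaryGroup_iff').mp hρ.1.eigenvectorUnitary.2
  have hE2 : E * Eᴴ = 1 := (Matrix.mem_unitaryGroup_iff).mp hρ.1.eigenvectorUnitary.2
  set U : Matrix (Fin d) (Fin d) ℂ := V * E with hUdef
  have hU : Uᴴ * U = 1 := by
    rw [hUdef, conjTranspose_mul]
    calc Eᴴ * Vᴴ * (V * E) = Eᴴ * (Vᴴ * V) * E := by noncomm_ring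
      _ = 1 := by rw [hV, Matrix.mul_one, hE1]
  have hU' : U * Uᴴ = 1 := by
    rw [hUdef, conjTranspose_mul]
    calc V * E * (Eᴴ * Vᴴ) = V * (E * Eᴴ) * Vᴴ := by noncomm_ring
      _ = 1 := by rw [hE2, Matrix.mul_one, hV']
  have hσdiag : σ = U * diagonal (fun k => (s k : ℂ)) * Uᴴ := by
    rw [hσ, hUdef, conjTranspose_mul]
    conv_lhs => rw [hρ.1.spectral_theorem, Unitary.conjStarAlgAut_apply]
    have : diagonal (RCLike.ofReal ∘ hρ.1.eigenvalues) = diagonal (fun k => (s k : ℂ)) := rfl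
    rw [this]
    simp only [Matrix.star_eq_conjTranspose, ← hEdef]
    noncomm_ring
  -- per-measurement-outcome spectral data
  have key1 : ∀ n, ∃ (Wn : Matrix (Fin d) (Fin d) ℂ) (gn : Fin d → ℝ),
      (Wnᴴ * Wn = 1) ∧ (Wn * Wnᴴ = 1) ∧
      (∀ j, (Wnᴴ * (P n * σ * P n) * Wn) j j = (gn j : ℂ)) ∧
      (∑ j, Real.negMulLog (gn j)
        = (if 0 < p n then
            Real.negMulLog (p n) + p n * vnEntropy ((p n)⁻¹ • (P n * σ * P n)) else 0)) := by
    intro n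
    by_cases h : 0 < p n
    · have hne : p n ≠ 0 := ne_of_gt h
      set σn : Matrix (Fin d) (Fin d) ℂ := (p n)⁻¹ • (P n * σ * P n) with hσn
      have hherm : σn.IsHermitian := by
        unfold Matrix.IsHermitian
        ext i j
        simp only [hσn, conjTranspose_apply, Matrix.smul_apply, star_smul, star_trivial]
        rw [show star ((P n * σ * P n) j i) = (P n * σ * P n) i j from
          congrFun (congrFun (hMps n).1 i) j]
      have hMeq : P n * σ * P n = (p n) • σn := by
        rw [hσn, smul_smul, mul_inv_cancel₀ hne, one_smul]
      set Wn : Matrix (Fin d) (Fin d) ℂ := (hherm.eigenvectorUnitary : Matrix (Fin d) (Fin d) ℂ)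
        with hWn
      have hW1 : Wnᴴ * Wn = 1 := (Matrix.mem_unitaryGroup_iff').mp hherm.eigenvectorUnitary.2
      have hW2 : Wn * Wnᴴ = 1 := (Matrix.mem_unitaryGroup_iff).mp hherm.eigenvectorUnitary.2
      have hdiag : Wnᴴ * σn * Wn = diagonal (fun j => (hherm.eigenvalues j : ℂ)) := by
        have := Matrix.IsHermitian.conjStarAlgAut_star_eigenvectorUnitary hherm
        simp only [Unitary.conjStarAlgAut_apply, Unitary.coe_star, star_star] at this
        rw [Matrix.star_eq_conjTranspose] at this
        rw [← hWn] at this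
        exact this
      -- trace of σn is 1
      have htr : σn.trace = 1 := by
        rw [hσn, Matrix.trace_smul, ← hp n, Complex.real_smul, ← Complex.ofReal_mul,
          inv_mul_cancel₀ hne, Complex.ofReal_one]
      have hμsum : ∑ j, hherm.eigenvalues j = 1 := by
        have h1 : ((∑ j, hherm.eigenvalues j : ℝ) : ℂ) = ((1 : ℝ) : ℂ) := by
          rw [Complex.ofReal_sum, ← aux_trace_eq_sum_eigenvalues hherm, htr, Complex.ofReal_one]
        exact_mod_cast h1
      refine ⟨Wn, fun j => p n * hherm.eigenvalues j, hW1, hW2, ?_, ?_⟩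
      · intro j
        rw [hMeq]
        have : Wnᴴ * ((p n) • σn) * Wn = (p n) • (Wnᴴ * σn * Wn) := by
          rw [Matrix.mul_smul, Matrix.smul_mul]
        rw [this, hdiag]
        simp [Matrix.smul_apply, diagonal_apply_eq, Complex.real_smul]
      · rw [if_pos h]
        have hvn : vnEntropy ((p n)⁻¹ • (P n * σ * P n)) = ∑ j, Real.negMulLog (hherm.eigenvalues j) := by
          rw [vnEntropy, dif_pos hherm]
        rw [hvn]
        calc ∑ j, Real.negMulLog (p n * hherm.eigenvalues j)
            = ∑ j, (hherm.eigenvalues j * Real.negMulLog (p n)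
                + p n * Real.negMulLog (hherm.eigenvalues j)) := by
              exact Finset.sum_congr rfl fun j _ => Real.negMulLog_mul _ _
          _ = (∑ j, hherm.eigenvalues j) * Real.negMulLog (p n)
                + p n * ∑ j, Real.negMulLog (hherm.eigenvalues j) := by
              rw [Finset.sum_add_distrib, Finset.sum_mul, Finset.mul_sum]
          _ = Real.negMulLog (p n) + p n * ∑ j, Real.negMulLog (hherm.eigenvalues j) := by
              rw [hμsum, one_mul]
    · -- p n = 0, so P n * σ * P n = 0
      have hp0 : p n = 0 := le_antisymm (not_lt.mp h) (hpnn n)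
      have hM0 : P n * σ * P n = 0 := by
        apply aux_psd_trace_zero (hMps n)
        rw [← hp n, hp0, Complex.ofReal_zero]
      refine ⟨1, fun _ => 0, by simp, by simp, ?_, by simp [if_neg h]⟩
      intro j
      rw [hM0]
      simp
  choose W g hW1 hW2 hWg hgsum using key1
  -- apply the key inequality
  have hkey : ∑ k, Real.negMulLog (s k) ≤ ∑ n, ∑ j, Real.negMulLog (g n j) := by
    refine key_ineq U hU hU' s hs P hP hPsum W hW1 hW2 g ?_
    intro n j
    rw [← hσdiag]
    exact hWg n j
  -- rewrite the left side
  have hLHS : vnEntropy ρ = ∑ k, Real.negMulLog (s k) := by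
    rw [vnEntropy, dif_pos hρ.1]
  -- rewrite the right side
  have hRHS : shannonEntropy p +
      (∑ n ∈ Finset.univ.filter (fun n => 0 < p n),
        p n * vnEntropy ((p n)⁻¹ • (P n * σ * P n)))
      = ∑ n, ∑ j, Real.negMulLog (g n j) := by
    rw [shannonEntropy, Finset.sum_filter, ← Finset.sum_add_distrib]
    refine Finset.sum_congr rfl fun n _ => ?_
    rw [hgsum n]
    by_cases h : 0 < p n
    · rw [if_pos h, if_pos h]
    · have hp0 : p n = 0 := le_antisymm (not_lt.mp h) (hpnn n)
      rw [if_neg h, if_neg h, hp0]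
      simp
  rw [← hRHS, ← hLHS] at hkey
  linarith
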